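/- Let T be a tournament whose edges are colored with k colors such that each color class is a transitive digraph. For each subset I of [k], let T_I be the scrambling of T obtained by reversing all edges of colors in I, and let S_I be a dominating set of T_I. Then R = ∪_{I⊆[k]} S_I is an enclosure set of T: for every vertex v not in R there exist a color i and vertices a,c in R with edges av and vc both of color i. -/
import Mathlib


/-- If `S I` is a dominating set of the scrambling `T_I` of a transitively
`k`-colored tournament `T` for each `I ⊆ [k]`, then the union of all `S I`
is an enclosure set of `T`. -/
theorem stmt2 {V : Type*} [Fintype V] [DecidableEq V] (k : ℕ)
    (T : V → V → Prop)
    (hirr : ∀ v, ¬ T v v)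
    (htot : ∀ x y, x ≠ y → T x y ∨ T y x)
    (hasym : ∀ x y, T x y → ¬ T y x)
    (col : V → V → Fin k)
    (hsymcol : ∀ x y, col x y = col y x)
    (htrans : ∀ a b c, T a b → T b c → col a b = col b c →
      T a c ∧ col a c = col a b)
    (S : Finset (Fin k) → Finset V)
    (hdom : ∀ I : Finset (Fin k), ∀ v ∉ S I, ∃ w ∈ S I,
      (col w v ∈ I ∧ T v w) ∨ (col w v ∉ I ∧ T w v))
    (R : Finset V) (hR : R = Finset.univ.biUnion S) :
    ∀ v ∉ R, ∃ (i : Fin k) (a c : V), a ∈ R ∧ c ∈ R ∧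
      T a v ∧ T v c ∧ col a v = i ∧ col v c = i := by
  classical
  intro v hv
  set I : Finset (Fin k) :=
    Finset.univ.filter (fun i => ∃ a ∈ R, T a v ∧ col a v = i) with hI
  have hvS : v ∉ S I := by
    intro h
    exact hv (hR ▸ Finset.mem_biUnion.mpr ⟨I, Finset.mem_univ _, h⟩)
  obtain ⟨w, hwS, hcase⟩ := hdom I v hvS
  have hwR : w ∈ R := hR ▸ Finset.mem_biUnion.mpr ⟨I, Finset.mem_univ _, hwS⟩
  rcases hcase with ⟨hcI, hTvw⟩ | ⟨hcI, hTwv⟩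
  · rw [hI, Finset.mem_filter] at hcI
    obtain ⟨-, a, haR, hTav, hcol⟩ := hcI
    exact ⟨col w v, a, w, haR, hwR, hTav, hTvw, hcol, hsymcol v w⟩
  · exact absurd (Finset.mem_filter.mpr ⟨Finset.mem_univ _, w, hwR, hTwv, rfl⟩) hcI
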